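/- For any two finite simple graphs G₁ and G₂, each with at least one vertex, the chromatic number of their Cartesian product satisfies χ(G₁ □ G₂) = max(χ(G₁), χ(G₂)). -/

import Mathlib

/-- Sabidussi: the chromatic number of a Cartesian (box) product is the
maximum of the chromatic numbers of the factors. -/
theorem stmt_2 {V W : Type*} [Fintype V] [Fintype W] [Nonempty V] [Nonempty W]
    (G₁ : SimpleGraph V) (G₂ : SimpleGraph W) :
    (G₁.boxProd G₂).chromaticNumber = max G₁.chromaticNumber G₂.chromaticNumber := by
  apply le_antisymm
  · -- upper bound: Sabidussi colouring
    set k : ℕ := max (ENat.toNat G₁.chromaticNumber) (ENat.toNat G₂.chromaticNumber) with hk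
    have h1 : G₁.Colorable k := (G₁.colorable_chromaticNumber_of_fintype).mono (le_max_left _ _)
    have h2 : G₂.Colorable k := (G₂.colorable_chromaticNumber_of_fintype).mono (le_max_right _ _)
    have hk0 : 0 < k := by
      rcases Nat.eq_zero_or_pos k with h | h
      · exact (((h ▸ h1).some (Classical.arbitrary V)).elim0)
      · exact h
    obtain ⟨C₁⟩ := h1
    obtain ⟨C₂⟩ := h2
    haveI : NeZero k := ⟨hk0.ne'⟩
    have hcol : (G₁.boxProd G₂).Colorable k := by
      have C : (G₁.boxProd G₂).Coloring (ZMod k) := by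
        refine SimpleGraph.Coloring.mk
          (fun p => ((C₁ p.1 : ZMod k) + (C₂ p.2 : ZMod k))) ?_
        rintro ⟨a₁, b₁⟩ ⟨a₂, b₂⟩ hadj
        rcases hadj with ⟨ha, hb⟩ | ⟨ha, hb⟩
        · obtain rfl : b₁ = b₂ := hb
          intro h
          dsimp only at h
          have := add_right_cancel h
          have hne : C₁ a₁ ≠ C₁ a₂ := C₁.valid ha
          apply hne
          have : ((C₁ a₁ : ℕ) : ZMod k) = ((C₁ a₂ : ℕ) : ZMod k) := by
            simpa using this
          have h2 := congrArg ZMod.val this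
          rw [ZMod.val_cast_of_lt (C₁ a₁).isLt, ZMod.val_cast_of_lt (C₁ a₂).isLt] at h2
          exact Fin.ext h2
        · obtain rfl : a₁ = a₂ := hb
          intro h
          dsimp only at h
          have := add_left_cancel h
          have hne : C₂ b₁ ≠ C₂ b₂ := C₂.valid ha
          apply hne
          have : ((C₂ b₁ : ℕ) : ZMod k) = ((C₂ b₂ : ℕ) : ZMod k) := by
            simpa using this
          have h2 := congrArg ZMod.val this
          rw [ZMod.val_cast_of_lt (C₂ b₁).isLt, ZMod.val_cast_of_lt (C₂ b₂).isLt] at h2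
          exact Fin.ext h2
      have := C.colorable
      rwa [ZMod.card] at this
    refine hcol.chromaticNumber_le.trans ?_
    have e1 : G₁.chromaticNumber ≠ ⊤ :=
      SimpleGraph.chromaticNumber_ne_top_iff_exists.2 ⟨_, G₁.colorable_of_fintype⟩
    have e2 : G₂.chromaticNumber ≠ ⊤ :=
      SimpleGraph.chromaticNumber_ne_top_iff_exists.2 ⟨_, G₂.colorable_of_fintype⟩
    rw [hk]
    have hmax : ((max (ENat.toNat G₁.chromaticNumber) (ENat.toNat G₂.chromaticNumber) : ℕ) : ℕ∞)
        = max ((ENat.toNat G₁.chromaticNumber : ℕ) : ℕ∞) ((ENat.toNat G₂.chromaticNumber : ℕ) : ℕ∞) :=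
      (Nat.mono_cast (α := ℕ∞)).map_max
    rw [hmax, ENat.coe_toNat e1, ENat.coe_toNat e2]
  · apply max_le
    · exact SimpleGraph.chromaticNumber_mono_of_hom
        (G₁.boxProdLeft G₂ (Classical.arbitrary W)).toHom
    · exact SimpleGraph.chromaticNumber_mono_of_hom
        (G₁.boxProdRight G₂ (Classical.arbitrary V)).toHom
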